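/- In any category with pushouts and tensors by the simplicial interval Δ[1] (or more generally in any simplicially enriched category admitting such tensors), inclusions of deformation retracts are stable under pushout: if i : C → D is an inclusion of a deformation retract and C → C' is any morphism, then the pushout i' : C' → D ∪_C C' is again an inclusion of a deformation retract. -/

import Mathlib

open CategoryTheory CategoryTheory.Limits

/-- An abstract cylinder (tensor with the simplicial interval `Δ[1]`): a functor `T`
with two endpoint inclusions `δ₀, δ₁ : 𝟭 ⟶ T` and a projection `p : T ⟶ 𝟭`
retracting them. -/
structure Cylinder (C : Type*) [Category C] where
  T : C ⥤ C
  δ₀ : 𝟭 C ⟶ T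
  δ₁ : 𝟭 C ⟶ T
  p : T ⟶ 𝟭 C
  retr₀ : ∀ X : C, δ₀.app X ≫ p.app X = 𝟙 X
  retr₁ : ∀ X : C, δ₁.app X ≫ p.app X = 𝟙 X

/-- `i : X ⟶ Y` is an inclusion of a deformation retract: there is `r : Y ⟶ X` with
`i ≫ r = 𝟙` and a homotopy `H : Y ⊗ Δ[1] ⟶ Y` from `𝟙 Y` to `r ≫ i` which is constant
on `X`. -/
def IsDefRetractIncl {C : Type*} [Category C] (cyl : Cylinder C) {X Y : C} (i : X ⟶ Y) : Prop :=
  ∃ (r : Y ⟶ X) (H : cyl.T.obj Y ⟶ Y),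
    i ≫ r = 𝟙 X ∧
    cyl.δ₀.app Y ≫ H = 𝟙 Y ∧
    cyl.δ₁.app Y ≫ H = r ≫ i ∧
    cyl.T.map i ≫ H = cyl.p.app X ≫ i

/-- Inclusions of deformation retracts are stable under pushout. -/
theorem isDefRetractIncl_pushout {C : Type*} [Category C] [HasPushouts C]
    (cyl : Cylinder C) [PreservesColimitsOfShape WalkingSpan cyl.T]
    {X Y X' : C} (i : X ⟶ Y) (f : X ⟶ X') (h : IsDefRetractIncl cyl i) :
    IsDefRetractIncl cyl (pushout.inr i f) := by
  obtain ⟨r, H, hir, h0, h1, hconst⟩ := h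
  refine ⟨pushout.desc (r ≫ f) (𝟙 X') (by rw [← Category.assoc, hir]; simp),
    (PreservesPushout.iso cyl.T i f).inv ≫ pushout.desc (H ≫ pushout.inl i f) (cyl.p.app X' ≫ pushout.inr i f) ?_, ?_, ?_, ?_, ?_⟩
  · rw [← Category.assoc, hconst, Category.assoc, pushout.condition, ← Category.assoc,
      ← Category.assoc]
    congr 1
    exact (cyl.p.naturality f).symm
  · exact pushout.inr_desc _ _ _
  · apply pushout.hom_ext
    · have n := cyl.δ₀.naturality (pushout.inl i f)
      simp only [Functor.id_map] at n
      rw [← Category.assoc, n]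
      simp only [Functor.id_map, Category.assoc, PreservesPushout.inl_iso_inv_assoc,
        pushout.inl_desc]
      rw [← Category.assoc, h0]
      simp
    · have n := cyl.δ₀.naturality (pushout.inr i f)
      simp only [Functor.id_map] at n
      rw [← Category.assoc, n]
      simp only [Functor.id_map, Category.assoc, PreservesPushout.inr_iso_inv_assoc,
        pushout.inr_desc]
      rw [← Category.assoc, cyl.retr₀]
      simp
  · apply pushout.hom_ext
    · have n := cyl.δ₁.naturality (pushout.inl i f)
      simp only [Functor.id_map] at n
      rw [← Category.assoc, n]
      simp only [Functor.id_map, Category.assoc, PreservesPushout.inl_iso_inv_assoc,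
        pushout.inl_desc]
      rw [← Category.assoc, h1]
      simp [pushout.condition]
      exact (Category.assoc _ _ _).symm.trans (congrArg (· ≫ pushout.inr i f) (pushout.inl_desc _ _ _).symm) |>.trans (Category.assoc _ _ _)
    · have n := cyl.δ₁.naturality (pushout.inr i f)
      simp only [Functor.id_map] at n
      rw [← Category.assoc, n]
      simp only [Functor.id_map, Category.assoc, PreservesPushout.inr_iso_inv_assoc,
        pushout.inr_desc]
      rw [← Category.assoc, cyl.retr₁]
      simp
      exact (Category.id_comp _).symm.trans <| (congrArg (· ≫ pushout.inr i f) (pushout.inr_desc (f := i) (g := f) (r ≫ f) (𝟙 X') (by rw [← Category.assoc, hir]; simp)).symm).trans (Category.assoc _ _ _)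
  · rw [← Category.assoc, PreservesPushout.inr_iso_inv]
    exact pushout.inr_desc _ _ _
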